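/- With the same hypotheses (the triple (G,H,N) has the Cohen–Lyndon property), the natural homomorphism ⟪N⟫/[G,⟪N⟫] → N/[H,N] defined on each free factor tNt⁻¹ by tnt⁻¹ ↦ n·[H,N] is an isomorphism, with inverse induced by the inclusion N → ⟪N⟫. -/

import Mathlib

open Subgroup Pointwise
open scoped commutatorElement

namespace CohenLyndonAux2

variable {G : Type*} [Group G] (H : Subgroup G) (N : Subgroup ↥H) [N.Normal] (T : Set G)

private abbrev SS : Subgroup G := Subgroup.map H.subtype N
private abbrev W : Subgroup G := Subgroup.normalClosure ((SS H N : Subgroup G) : Set G)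
private abbrev KW : Subgroup ↥(W H N) := (⁅(⊤ : Subgroup G), W H N⁆).subgroupOf (W H N)
private abbrev KN : Subgroup ↥N := (⁅(⊤ : Subgroup ↥H), N⁆).subgroupOf N

private abbrev fam (t : ↥T) : Subgroup G :=
  Subgroup.map (MulAut.conj (t : G)).toMonoidHom (SS H N)

private abbrev LL : Monoid.CoprodI (fun t : ↥T => ↥(fam H N T t)) →* G :=
  Monoid.CoprodI.lift fun t => (fam H N T t).subtype

private noncomputable def eFac (t : ↥T) : ↥N ≃* ↥(fam H N T t) :=
  (N.equivMapOfInjective H.subtype H.subtype_injective).trans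
    ((SS H N).equivMapOfInjective (MulAut.conj (t : G)).toMonoidHom (MulAut.conj (t : G)).injective)

private noncomputable def fN (t : ↥T) : ↥(fam H N T t) →* (↥N ⧸ KN H N) :=
  (QuotientGroup.mk' (KN H N)).comp (eFac H N T t).symm.toMonoidHom

private noncomputable def phi (hinj : Function.Injective (LL H N T))
    (hrange : (LL H N T).range = W H N) : ↥(W H N) →* (↥N ⧸ KN H N) :=
  (Monoid.CoprodI.lift (fN H N T)).comp
    (((MonoidHom.ofInjective hinj).trans (MulEquiv.subgroupCongr hrange)).symm.toMonoidHom)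

variable {H N T}
variable (hinj : Function.Injective (LL H N T)) (hrange : (LL H N T).range = W H N)

private theorem phi_factor (t : ↥T) (n : ↥N) (x : ↥(W H N))
    (hx : (x : G) = t * H.subtype n * (t : G)⁻¹) :
    phi H N T hinj hrange x = QuotientGroup.mk n := by
  have hfac : (eFac H N T t n : G) = (t : G) * H.subtype n * (t : G)⁻¹ := by
    show (((SS H N).equivMapOfInjective (MulAut.conj (t : G)).toMonoidHom
        (MulAut.conj (t : G)).injective)
        ((N.equivMapOfInjective H.subtype H.subtype_injective) n) : G) = _
    rfl
  have hmem : (x : G) ∈ fam H N T t := by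
    rw [hx, ← hfac]; exact (eFac H N T t n).2
  let m : ↥(fam H N T t) := ⟨(x : G), hmem⟩
  have h1 : ((MonoidHom.ofInjective hinj).trans (MulEquiv.subgroupCongr hrange)).symm x
      = Monoid.CoprodI.of (M := fun t : ↥T => ↥(fam H N T t)) (i := t) m := by
    rw [MulEquiv.symm_apply_eq]
    refine Subtype.ext ?_
    rw [MulEquiv.trans_apply, MulEquiv.subgroupCongr_apply, MonoidHom.ofInjective_apply]
    show (x : G) = LL H N T (Monoid.CoprodI.of m)
    rw [Monoid.CoprodI.lift_of]
    rfl
  have h2 : (eFac H N T t).symm m = n := by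
    rw [MulEquiv.symm_apply_eq]
    exact Subtype.ext (by rw [hfac, ← hx])
  simp only [phi, MonoidHom.comp_apply, MulEquiv.coe_toMonoidHom]
  rw [h1, Monoid.CoprodI.lift_of]
  simp only [fN, MonoidHom.comp_apply, MulEquiv.coe_toMonoidHom]
  rw [h2]
  rfl


private theorem quot_comm' {P : Type*} [Group P] (K : Subgroup P) [K.Normal]
    (a b : ↥K ⧸ ((⁅(⊤ : Subgroup P), K⁆).subgroupOf K)) : a * b = b * a := by
  induction a using QuotientGroup.induction_on with
  | H x =>
  induction b using QuotientGroup.induction_on with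
  | H y =>
  rw [← QuotientGroup.mk_mul, ← QuotientGroup.mk_mul, QuotientGroup.eq, mem_subgroupOf]
  have h : ((((x*y)⁻¹*(y*x) : ↥K)) : P) = ⁅((y:P))⁻¹, ((x:P))⁻¹⁆ := by
    rw [commutatorElement_def]; push_cast; group
  rw [h]
  exact commutator_mem_commutator (mem_top _) (K.inv_mem x.2)

private theorem phi_conj (htrans : ∀ g : G, ∃! t : ↥T, (t : G)⁻¹ * g ∈ H ⊔ W H N)
    (g : G) (n : ↥N) (x : ↥(W H N))
    (hx : (x : G) = g * H.subtype n * g⁻¹) :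
    phi H N T hinj hrange x = QuotientGroup.mk n := by
  obtain ⟨t, ht, -⟩ := htrans g
  have hmul : ((t : G)⁻¹ * g) ∈ (H : Set G) * (W H N : Set G) := by
    rw [← Subgroup.mul_normal]; exact ht
  obtain ⟨h, hh, u, hu, hhu⟩ := Set.mem_mul.mp hmul
  have hg : g = (t : G) * (h * u) := by rw [hhu, mul_inv_cancel_left]
  have hN : N.Normal := inferInstance
  set hHe : ↥H := ⟨h, hh⟩ with hHe_def
  set n' : ↥N := ⟨hHe * (n : ↥H) * hHe⁻¹, hN.conj_mem (n : ↥H) n.2 hHe⟩ with hn'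
  have hWn : (W H N).Normal := Subgroup.normalClosure_normal
  have hv : (t : G) * (h * u * h⁻¹) * (t : G)⁻¹ ∈ W H N :=
    hWn.conj_mem _ (hWn.conj_mem u hu h) _
  have hy : (t : G) * (H.subtype n') * (t : G)⁻¹ ∈ W H N :=
    hWn.conj_mem _ (subset_normalClosure (mem_map_of_mem _ n'.2)) _
  have hcoe : (H.subtype n' : G) = h * (H.subtype n) * h⁻¹ := rfl
  have hxeq : x = (⟨_, hv⟩ : ↥(W H N)) * ⟨_, hy⟩ * (⟨_, hv⟩ : ↥(W H N))⁻¹ := by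
    apply Subtype.ext
    push_cast
    rw [hx, hg, hcoe]
    group
  rw [hxeq, map_mul, map_mul, map_inv,
    quot_comm' _ (phi H N T hinj hrange ⟨_, hv⟩) (phi H N T hinj hrange ⟨_, hy⟩),
    mul_inv_cancel_right, phi_factor hinj hrange t n' ⟨_, hy⟩ rfl]
  rw [QuotientGroup.eq, mem_subgroupOf]
  have hco : (((n'⁻¹ * n : ↥N)) : ↥H) = ⁅hHe, ((n : ↥H))⁻¹⁆ := by
    rw [commutatorElement_def]; push_cast
    rw [show ((n' : ↥H)) = hHe * n * hHe⁻¹ from rfl]; group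
  rw [hco]
  exact commutator_mem_commutator (mem_top _) (N.inv_mem n.2)


variable (htrans : ∀ g : G, ∃! t : ↥T, (t : G)⁻¹ * g ∈ H ⊔ W H N)
include htrans

private theorem phi_conj_inv :
    ∀ (w : G) (hw : w ∈ W H N) (g : G) (hm : g * w * g⁻¹ ∈ W H N),
      phi H N T hinj hrange ⟨g * w * g⁻¹, hm⟩ = phi H N T hinj hrange ⟨w, hw⟩ := by
  have hWn : (W H N).Normal := Subgroup.normalClosure_normal
  intro w hw
  refine Subgroup.closure_induction
    (p := fun w _ => ∀ (hw : w ∈ W H N) (g : G) (hm : g * w * g⁻¹ ∈ W H N),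
      phi H N T hinj hrange ⟨g * w * g⁻¹, hm⟩ = phi H N T hinj hrange ⟨w, hw⟩)
    ?_ ?_ ?_ ?_ (show w ∈ closure (Group.conjugatesOfSet ((SS H N : Subgroup G) : Set G)) from hw)
    hw
  · intro w hwc hw g hm
    obtain ⟨a, ha, hconj⟩ := Group.mem_conjugatesOfSet_iff.mp hwc
    obtain ⟨c, hc⟩ := isConj_iff.mp hconj
    obtain ⟨nn, hnn, rfl⟩ := Subgroup.mem_map.mp ha
    rw [phi_conj hinj hrange htrans c ⟨nn, hnn⟩ ⟨w, hw⟩ hc.symm]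
    refine phi_conj hinj hrange htrans (g * c) ⟨nn, hnn⟩ _ ?_
    show g * w * g⁻¹ = _
    rw [← hc]; group
  · intro hw g hm
    have h1 : (⟨g * 1 * g⁻¹, hm⟩ : ↥(W H N)) = 1 := Subtype.ext (by simp)
    have h2 : (⟨1, hw⟩ : ↥(W H N)) = 1 := rfl
    rw [h1, h2]
  · intro a b ha hb iha ihb hw g hm
    have haW : a ∈ W H N := ha
    have hbW : b ∈ W H N := hb
    have hga : g * a * g⁻¹ ∈ W H N := hWn.conj_mem a haW g
    have hgb : g * b * g⁻¹ ∈ W H N := hWn.conj_mem b hbW g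
    have e1 : (⟨g * (a * b) * g⁻¹, hm⟩ : ↥(W H N)) = ⟨g * a * g⁻¹, hga⟩ * ⟨g * b * g⁻¹, hgb⟩ :=
      Subtype.ext (by push_cast; group)
    have e2 : (⟨a * b, hw⟩ : ↥(W H N)) = ⟨a, haW⟩ * ⟨b, hbW⟩ := rfl
    rw [e1, e2, map_mul, map_mul, iha haW g hga, ihb hbW g hgb]
  · intro a ha iha hw g hm
    have haW : a ∈ W H N := ha
    have hga : g * a * g⁻¹ ∈ W H N := hWn.conj_mem a haW g
    have e1 : (⟨g * a⁻¹ * g⁻¹, hm⟩ : ↥(W H N)) = (⟨g * a * g⁻¹, hga⟩ : ↥(W H N))⁻¹ :=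
      Subtype.ext (by push_cast; group)
    have e2 : (⟨a⁻¹, hw⟩ : ↥(W H N)) = (⟨a, haW⟩ : ↥(W H N))⁻¹ := rfl
    rw [e1, e2, map_inv, map_inv, iha haW g hga]


private theorem phi_ker (x : ↥(W H N)) (hx : (x : G) ∈ ⁅(⊤ : Subgroup G), W H N⁆) :
    phi H N T hinj hrange x = 1 := by
  have hWn : (W H N).Normal := Subgroup.normalClosure_normal
  obtain ⟨w, hwW⟩ := x
  simp only at hx
  rw [Subgroup.commutator_def] at hx
  refine Subgroup.closure_induction
    (p := fun w _ => ∀ (hw : w ∈ W H N), phi H N T hinj hrange ⟨w, hw⟩ = 1)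
    ?_ ?_ ?_ ?_ hx hwW
  · intro w hwc hw
    obtain ⟨p, -, q, hq, rfl⟩ := hwc
    have hq1 : p * q * p⁻¹ ∈ W H N := hWn.conj_mem q hq p
    have e1 : (⟨⁅p, q⁆, hw⟩ : ↥(W H N)) =
        ⟨p * q * p⁻¹, hq1⟩ * (⟨q, hq⟩ : ↥(W H N))⁻¹ := by
      apply Subtype.ext; push_cast; rw [commutatorElement_def]
    rw [e1, map_mul, map_inv, phi_conj_inv hinj hrange htrans q hq p hq1, mul_inv_cancel]
  · intro hw
    have : (⟨1, hw⟩ : ↥(W H N)) = 1 := rfl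
    rw [this, map_one]
  · intro a b ha hb iha ihb hw
    have haW : a ∈ W H N := commutator_le_right ⊤ (W H N) (by rw [Subgroup.commutator_def]; exact ha)
    have hbW : b ∈ W H N := commutator_le_right ⊤ (W H N) (by rw [Subgroup.commutator_def]; exact hb)
    have e2 : (⟨a * b, hw⟩ : ↥(W H N)) = ⟨a, haW⟩ * ⟨b, hbW⟩ := rfl
    rw [e2, map_mul, iha haW, ihb hbW, one_mul]
  · intro a ha iha hw
    have haW : a ∈ W H N := commutator_le_right ⊤ (W H N) (by rw [Subgroup.commutator_def]; exact ha)
    have e2 : (⟨a⁻¹, hw⟩ : ↥(W H N)) = (⟨a, haW⟩ : ↥(W H N))⁻¹ := rfl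
    rw [e2, map_inv, iha haW, inv_one]


variable (H N) in
private def incl : ↥N →* ↥(W H N) :=
  (H.subtype.comp N.subtype).codRestrict (W H N) fun n =>
    Subgroup.subset_normalClosure (Subgroup.mem_map_of_mem _ n.2)

omit htrans in
variable (H N) in
private theorem psi_ker : KN H N ≤ ((QuotientGroup.mk' (KW H N)).comp (incl H N)).ker := by
  intro n hn
  rw [MonoidHom.mem_ker, MonoidHom.comp_apply, QuotientGroup.mk'_apply,
    QuotientGroup.eq_one_iff, mem_subgroupOf]
  have h1 : (↑n : ↥H) ∈ ⁅(⊤ : Subgroup ↥H), N⁆ := mem_subgroupOf.mp hn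
  have h2 : H.subtype (↑n : ↥H) ∈ Subgroup.map H.subtype ⁅(⊤ : Subgroup ↥H), N⁆ :=
    mem_map_of_mem _ h1
  rw [Subgroup.map_commutator] at h2
  exact Subgroup.commutator_mono le_top
    (fun x hx => Subgroup.subset_normalClosure hx) h2

private theorem rt2 : ∀ (w : G) (hw : w ∈ W H N),
    QuotientGroup.lift (KN H N)
        ((QuotientGroup.mk' (KW H N)).comp (incl H N)) (psi_ker H N)
        (phi H N T hinj hrange ⟨w, hw⟩)
      = QuotientGroup.mk ⟨w, hw⟩ := by
  intro w hw
  refine Subgroup.closure_induction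
    (p := fun w _ => ∀ (hw : w ∈ W H N),
      QuotientGroup.lift (KN H N)
        ((QuotientGroup.mk' (KW H N)).comp (incl H N)) (psi_ker H N)
        (phi H N T hinj hrange ⟨w, hw⟩) = QuotientGroup.mk ⟨w, hw⟩)
    ?_ ?_ ?_ ?_ (show w ∈ closure (Group.conjugatesOfSet ((SS H N : Subgroup G) : Set G)) from hw)
    hw
  · intro w hwc hw
    obtain ⟨a, ha, hconj⟩ := Group.mem_conjugatesOfSet_iff.mp hwc
    obtain ⟨c, hc⟩ := isConj_iff.mp hconj
    obtain ⟨nn, hnn, rfl⟩ := Subgroup.mem_map.mp ha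
    rw [phi_conj hinj hrange htrans c ⟨nn, hnn⟩ ⟨w, hw⟩ hc.symm]
    rw [QuotientGroup.lift_mk']
    show (QuotientGroup.mk (incl H N ⟨nn, hnn⟩) : ↥(W H N) ⧸ KW H N) = _
    rw [QuotientGroup.eq, mem_subgroupOf]
    have e1 : (((incl H N ⟨nn, hnn⟩)⁻¹ * ⟨w, hw⟩ : ↥(W H N)) : G)
        = ⁅(H.subtype nn)⁻¹, c⁆ := by
      push_cast
      rw [commutatorElement_def, ← hc]
      show (H.subtype nn)⁻¹ * (c * H.subtype nn * c⁻¹) = _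
      group
    rw [e1, Subgroup.commutator_comm]
    exact commutator_mem_commutator
      (inv_mem (Subgroup.subset_normalClosure (Subgroup.mem_map_of_mem _ hnn))) (mem_top c)
  · intro hw
    have h2 : (⟨1, hw⟩ : ↥(W H N)) = 1 := rfl
    rw [h2, map_one, map_one]
    rfl
  · intro a b ha hb iha ihb hw
    have haW : a ∈ W H N := ha
    have hbW : b ∈ W H N := hb
    have e2 : (⟨a * b, hw⟩ : ↥(W H N)) = ⟨a, haW⟩ * ⟨b, hbW⟩ := rfl
    rw [e2, map_mul, map_mul, iha haW, ihb hbW, QuotientGroup.mk_mul]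
  · intro a ha iha hw
    have haW : a ∈ W H N := ha
    have e2 : (⟨a⁻¹, hw⟩ : ↥(W H N)) = (⟨a, haW⟩ : ↥(W H N))⁻¹ := rfl
    rw [e2, map_inv, map_inv, iha haW, QuotientGroup.mk_inv]

private theorem rt1 (n : ↥N) :
    phi H N T hinj hrange (incl H N n) = QuotientGroup.mk n := by
  refine phi_conj hinj hrange htrans 1 n _ ?_
  show H.subtype n = 1 * H.subtype n * 1⁻¹
  group


private noncomputable def FF : (↥(W H N) ⧸ KW H N) →* (↥N ⧸ KN H N) :=
  QuotientGroup.lift (KW H N) (phi H N T hinj hrange)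
    (fun x hx => MonoidHom.mem_ker.mpr
      (phi_ker hinj hrange htrans x (mem_subgroupOf.mp hx)))

omit htrans in
variable (H N) in
private noncomputable def PsiD : (↥N ⧸ KN H N) →* (↥(W H N) ⧸ KW H N) :=
  QuotientGroup.lift (KN H N) ((QuotientGroup.mk' (KW H N)).comp (incl H N)) (psi_ker H N)

private theorem left_inv_aux (a : ↥(W H N) ⧸ KW H N) :
    PsiD H N (FF hinj hrange htrans a) = a := by
  induction a using QuotientGroup.induction_on with
  | H x =>
  obtain ⟨w, hw⟩ := x
  simp only [FF, QuotientGroup.lift_mk]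
  exact rt2 hinj hrange htrans w hw

private theorem right_inv_aux (q : ↥N ⧸ KN H N) :
    FF hinj hrange htrans (PsiD H N q) = q := by
  induction q using QuotientGroup.induction_on with
  | H n =>
  simp only [PsiD, QuotientGroup.lift_mk, MonoidHom.comp_apply, QuotientGroup.mk'_apply]
  simp only [FF, QuotientGroup.lift_mk]
  exact rt1 hinj hrange htrans n

end CohenLyndonAux2


/-- Under the Cohen–Lyndon property for `(G,H,N)`, the natural homomorphism
`⟪N⟫/[G,⟪N⟫] → N/[H,N]` sending (the class of) `tnt⁻¹` to the class of `n` for each `t` in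
the transversal `T` is an isomorphism, whose inverse is induced by the inclusion `N → ⟪N⟫`. -/
theorem mulEquiv_of_cohenLyndon {G : Type*} [Group G] (H : Subgroup G)
    (N : Subgroup ↥H) [N.Normal]
    (T : Set G)
    (htrans : ∀ g : G, ∃! t : ↥T,
      (t : G)⁻¹ * g ∈ H ⊔ Subgroup.normalClosure ((Subgroup.map H.subtype N : Subgroup G) : Set G))
    (hinj : Function.Injective
      (Monoid.CoprodI.lift (fun t : ↥T =>
        (Subgroup.map (MulAut.conj (t : G)).toMonoidHom
          (Subgroup.map H.subtype N)).subtype)))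
    (hrange : (Monoid.CoprodI.lift (fun t : ↥T =>
        (Subgroup.map (MulAut.conj (t : G)).toMonoidHom
          (Subgroup.map H.subtype N)).subtype)).range
      = Subgroup.normalClosure ((Subgroup.map H.subtype N : Subgroup G) : Set G)) :
    ∃ e : (↥(Subgroup.normalClosure ((Subgroup.map H.subtype N : Subgroup G) : Set G)) ⧸
        ((⁅(⊤ : Subgroup G),
            Subgroup.normalClosure ((Subgroup.map H.subtype N : Subgroup G) : Set G)⁆).subgroupOf
          (Subgroup.normalClosure ((Subgroup.map H.subtype N : Subgroup G) : Set G)))) ≃*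
      (↥N ⧸ ((⁅(⊤ : Subgroup ↥H), N⁆).subgroupOf N)),
      (∀ t ∈ T, ∀ (n : ↥N)
        (x : ↥(Subgroup.normalClosure ((Subgroup.map H.subtype N : Subgroup G) : Set G))),
        (x : G) = t * (H.subtype n) * t⁻¹ → e (QuotientGroup.mk x) = QuotientGroup.mk n) ∧
      (∀ (n : ↥N)
        (x : ↥(Subgroup.normalClosure ((Subgroup.map H.subtype N : Subgroup G) : Set G))),
        (x : G) = H.subtype n → e.symm (QuotientGroup.mk n) = QuotientGroup.mk x) := by
  have hinj' : Function.Injective (CohenLyndonAux2.LL H N T) := hinj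
  have hrange' : (CohenLyndonAux2.LL H N T).range = CohenLyndonAux2.W H N := hrange
  have htrans' : ∀ g : G, ∃! t : ↥T, (t : G)⁻¹ * g ∈ H ⊔ CohenLyndonAux2.W H N := htrans
  refine ⟨{ toFun := CohenLyndonAux2.FF hinj' hrange' htrans',
            invFun := CohenLyndonAux2.PsiD H N,
            left_inv := CohenLyndonAux2.left_inv_aux hinj' hrange' htrans',
            right_inv := CohenLyndonAux2.right_inv_aux hinj' hrange' htrans',
            map_mul' := map_mul _ }, ?_, ?_⟩
  · intro t ht n x hx
    show CohenLyndonAux2.FF hinj' hrange' htrans' (QuotientGroup.mk x) = QuotientGroup.mk n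
    simp only [CohenLyndonAux2.FF, QuotientGroup.lift_mk]
    exact CohenLyndonAux2.phi_conj hinj' hrange' htrans' t n x hx
  · intro n x hx
    show CohenLyndonAux2.PsiD H N (QuotientGroup.mk n) = QuotientGroup.mk x
    simp only [CohenLyndonAux2.PsiD, QuotientGroup.lift_mk, MonoidHom.comp_apply,
      QuotientGroup.mk'_apply]
    exact congrArg QuotientGroup.mk (Subtype.ext hx.symm)
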